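/- Let n ≥ 1, let p₀ ∈ ℝ and p ∈ ℝⁿ with ‖p‖ < p₀, set d = p₀² − ‖p‖², let k ≥ 1 be real and ℓ = √(1 + d·k²). Then the Lebesgue measure of the set E = {r ∈ ℝⁿ : k²·(p₀ + ⟨p, r⟩)² < ℓ²·(1 − ‖r‖²)} is strictly less than ω_n / p₀ⁿ, where ω_n is the Lebesgue measure of the closed unit ball in ℝⁿ. -/

import Mathlib

open scoped RealInnerProductSpace

set_option maxHeartbeats 1000000 in
/-- Proposition 3.2 of the paper: the Lebesgue measure of the submaximality domain
`E = {r : k²(p₀ + ⟨p,r⟩)² < ℓ²(1 − ‖r‖²)}` is strictly less than `ω_n / p₀ⁿ`, where `ω_n` is the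
volume of the closed unit ball in `ℝⁿ`. -/
theorem volume_submaximality_domain_lt (n : ℕ) (hn : 1 ≤ n)
    (p₀ : ℝ) (p : EuclideanSpace ℝ (Fin n)) (hp : ‖p‖ < p₀)
    (k : ℝ) (hk : 1 ≤ k) (ℓ : ℝ) (hℓ : ℓ = Real.sqrt (1 + (p₀ ^ 2 - ‖p‖ ^ 2) * k ^ 2)) :
    MeasureTheory.volume
        {r : EuclideanSpace ℝ (Fin n) | k ^ 2 * (p₀ + ⟪p, r⟫) ^ 2 < ℓ ^ 2 * (1 - ‖r‖ ^ 2)}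
      < ENNReal.ofReal
        ((MeasureTheory.volume (Metric.closedBall (0 : EuclideanSpace ℝ (Fin n)) 1)).toReal
          / p₀ ^ n) := by
  haveI : NeZero n := ⟨by omega⟩
  have hp0 : 0 < p₀ := lt_of_le_of_lt (norm_nonneg p) hp
  -- a unit vector `e` with `p = ‖p‖ • e`
  obtain ⟨e, he, hpe⟩ : ∃ e : EuclideanSpace ℝ (Fin n), ‖e‖ = 1 ∧ p = ‖p‖ • e := by
    rcases eq_or_ne p 0 with h0 | h0
    · exact ⟨EuclideanSpace.single 0 1, by simp [EuclideanSpace.norm_single], by simp [h0]⟩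
    · refine ⟨‖p‖⁻¹ • p, norm_smul_inv_norm h0, ?_⟩
      rw [smul_smul, mul_inv_cancel₀ (norm_ne_zero_iff.mpr h0), one_smul]
  -- an orthonormal basis whose first vector is `e`
  obtain ⟨b, hb0⟩ : ∃ b : OrthonormalBasis (Fin n) ℝ (EuclideanSpace ℝ (Fin n)), b 0 = e := by
    have hcard : Module.finrank ℝ (EuclideanSpace ℝ (Fin n)) = Fintype.card (Fin n) := by
      simp [finrank_euclideanSpace]
    have horth : Orthonormal ℝ (({(0 : Fin n)} : Set (Fin n)).restrict
        (fun _ => e : Fin n → EuclideanSpace ℝ (Fin n))) := by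
      rw [orthonormal_iff_ite]
      intro i j
      have hij : i = j := Subtype.ext ((Set.mem_singleton_iff.mp i.2).trans
        (Set.mem_singleton_iff.mp j.2).symm)
      subst hij
      rw [if_pos rfl]
      show ⟪e, e⟫ = 1
      rw [real_inner_self_eq_norm_sq, he]; norm_num
    obtain ⟨b, hb⟩ := horth.exists_orthonormalBasis_extension_of_card_eq hcard
    exact ⟨b, hb 0 rfl⟩
  -- scalars
  set a : ℝ := 1 + k ^ 2 * p₀ ^ 2 with ha
  set α : ℝ := a / ℓ with hα
  set β : ℝ := Real.sqrt a with hβ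
  set t : ℝ := k ^ 2 * p₀ * ‖p‖ / ℓ with ht
  have ha0 : 0 < a := by rw [ha]; positivity
  have hβ2 : β ^ 2 = a := by rw [hβ]; exact Real.sq_sqrt ha0.le
  have hβ0 : 0 < β := by rw [hβ]; exact Real.sqrt_pos.mpr ha0
  have hP2 : ‖p‖ ^ 2 < p₀ ^ 2 := by nlinarith [norm_nonneg p]
  have harg : (0:ℝ) < 1 + (p₀ ^ 2 - ‖p‖ ^ 2) * k ^ 2 := by nlinarith [sq_nonneg k]
  have hℓ0 : 0 < ℓ := by rw [hℓ]; exact Real.sqrt_pos.mpr harg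
  have hL2 : ℓ ^ 2 = 1 + (p₀ ^ 2 - ‖p‖ ^ 2) * k ^ 2 := by rw [hℓ]; exact Real.sq_sqrt harg.le
  have hαℓ : α * ℓ = a := by rw [hα]; field_simp
  have htℓ : t * ℓ = k ^ 2 * p₀ * ‖p‖ := by rw [ht]; field_simp
  have hα0 : 0 < α := by rw [hα]; exact div_pos ha0 hℓ0
  -- the linear map sending the ellipsoid (up to translation) to the unit ball
  set g : EuclideanSpace ℝ (Fin n) →ₗ[ℝ] EuclideanSpace ℝ (Fin n) :=
    (β • LinearMap.id) + LinearMap.smulRight (innerSL ℝ e).toLinearMap ((α - β) • e) with hgdef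
  have hg : ∀ r, g r = β • r + ⟪e, r⟫ • ((α - β) • e) := by
    intro r
    simp [hgdef]
  -- membership description
  have hmem : ∀ r : EuclideanSpace ℝ (Fin n),
      (k ^ 2 * (p₀ + ⟪p, r⟫) ^ 2 < ℓ ^ 2 * (1 - ‖r‖ ^ 2)) ↔
        ‖(β • r + ⟪e, r⟫ • ((α - β) • e)) + t • e‖ < 1 := by
    intro r
    have hpr : ⟪p, r⟫ = ‖p‖ * ⟪e, r⟫ := by
      conv_lhs => rw [hpe]
      exact real_inner_smul_left e r ‖p‖
    have h1 : (β • r + ⟪e, r⟫ • ((α - β) • e)) + t • e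
        = β • r + (⟪e, r⟫ * (α - β) + t) • e := by
      rw [smul_smul, add_assoc, ← add_smul]
    have hN : ‖(β • r + ⟪e, r⟫ • ((α - β) • e)) + t • e‖ ^ 2
        = a * ‖r‖ ^ 2 + (α ^ 2 - a) * ⟪e, r⟫ ^ 2 + 2 * α * t * ⟪e, r⟫ + t ^ 2 := by
      rw [h1, norm_add_sq_real, norm_smul, norm_smul, real_inner_smul_left,
        real_inner_smul_right, real_inner_comm r e, he, Real.norm_eq_abs,
        Real.norm_eq_abs, mul_pow, mul_pow, sq_abs, sq_abs]
      ring_nf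
      rw [hβ2]; ring
    have iden : ℓ ^ 2 * (a * ‖r‖ ^ 2 + (α ^ 2 - a) * ⟪e, r⟫ ^ 2 + 2 * α * t * ⟪e, r⟫ + t ^ 2)
          - ℓ ^ 2
        = a * (k ^ 2 * (p₀ + ‖p‖ * ⟪e, r⟫) ^ 2 - ℓ ^ 2 * (1 - ‖r‖ ^ 2)) := by
      linear_combination (⟪e, r⟫ ^ 2 * (α * ℓ + a) + 2 * t * ℓ * ⟪e, r⟫) * hαℓ
        + (2 * a * ⟪e, r⟫ + t * ℓ + k ^ 2 * p₀ * ‖p‖) * htℓ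
        + (a * ⟪e, r⟫ ^ 2 + ℓ ^ 2 - k ^ 2 * p₀ ^ 2) * ha
        + (k ^ 2 * p₀ ^ 2 - a * ⟪e, r⟫ ^ 2) * hL2
    rw [hpr, show ‖(β • r + ⟪e, r⟫ • ((α - β) • e)) + t • e‖ < 1
        ↔ ‖(β • r + ⟪e, r⟫ • ((α - β) • e)) + t • e‖ ^ 2 < 1 from
      (pow_lt_one_iff_of_nonneg (norm_nonneg _) two_ne_zero).symm, hN]
    constructor <;> intro h <;> nlinarith [mul_pos hℓ0 hℓ0, sq_nonneg ℓ]
  -- the set is a preimage of a ball under `g`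
  have hset : {r : EuclideanSpace ℝ (Fin n) |
        k ^ 2 * (p₀ + ⟪p, r⟫) ^ 2 < ℓ ^ 2 * (1 - ‖r‖ ^ 2)}
      = ⇑g ⁻¹' Metric.ball (-(t • e)) 1 := by
    ext r
    simp only [Set.mem_setOf_eq, Set.mem_preimage, Metric.mem_ball, dist_eq_norm,
      sub_neg_eq_add]
    rw [hg r]
    exact hmem r
  -- the determinant of `g`
  have hge : ∀ j : Fin n, g (b j) = (if j = 0 then α else β) • b j := by
    intro j
    rcases eq_or_ne j 0 with rfl | hj
    · rw [hg, hb0, real_inner_self_eq_norm_sq, he]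
      rw [if_pos rfl]
      rw [one_pow, one_smul, ← add_smul]
      ring_nf
    · rw [hg, ← hb0, b.orthonormal.2 (Ne.symm hj), zero_smul, add_zero, if_neg hj]
  have hM : LinearMap.toMatrix b.toBasis b.toBasis g
      = Matrix.diagonal (fun j => if j = 0 then α else β) := by
    ext i j
    rw [LinearMap.toMatrix_apply, OrthonormalBasis.coe_toBasis, hge j, _root_.map_smul]
    rw [show b j = b.toBasis j from (OrthonormalBasis.coe_toBasis b ▸ rfl), Module.Basis.repr_self]
    rcases eq_or_ne i j with rfl | hij
    · rw [Matrix.diagonal_apply_eq]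
      split <;> simp
    · rw [Matrix.diagonal_apply_ne _ hij]
      split <;> simp [Finsupp.single_apply, hij] <;> exact fun h => absurd h.symm hij
  have hdet : LinearMap.det g = α * β ^ (n - 1) := by
    rw [← LinearMap.det_toMatrix b.toBasis g, hM, Matrix.det_diagonal]
    rw [← Finset.mul_prod_erase Finset.univ _ (Finset.mem_univ (0 : Fin n)), if_pos rfl]
    rw [Finset.prod_congr rfl (fun x hx => if_neg (Finset.mem_erase.mp hx).1),
      Finset.prod_const, Finset.card_erase_of_mem (Finset.mem_univ _), Finset.card_univ,
      Fintype.card_fin]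
  have hD0 : 0 < α * β ^ (n - 1) := by positivity
  have hdetne : LinearMap.det g ≠ 0 := by rw [hdet]; exact hD0.ne'
  -- compute the volume
  rw [hset, MeasureTheory.Measure.addHaar_preimage_linearMap MeasureTheory.volume hdetne,
    MeasureTheory.Measure.addHaar_ball_center,
    ← MeasureTheory.Measure.addHaar_unitClosedBall_eq_addHaar_unitBall, hdet]
  set ω := MeasureTheory.volume (Metric.closedBall (0 : EuclideanSpace ℝ (Fin n)) 1) with hω
  have hω0 : ω ≠ 0 := by
    rw [hω]
    exact (Metric.measure_closedBall_pos MeasureTheory.volume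
      (0 : EuclideanSpace ℝ (Fin n)) one_pos).ne'
  have hωt : ω ≠ ⊤ := MeasureTheory.measure_closedBall_lt_top.ne
  -- the key numeric inequality
  have hp0n : (0:ℝ) < p₀ ^ n := by positivity
  have hkey : p₀ ^ n < α * β ^ (n - 1) := by
    have hℓβ : ℓ ≤ β := by
      rw [hℓ, hβ, ha]
      exact Real.sqrt_le_sqrt (by nlinarith [sq_nonneg (k * ‖p‖)])
    have hp₀β : p₀ < β := by
      rw [hβ]
      have hk2 : (1:ℝ) ≤ k ^ 2 := by nlinarith
      exact (Real.lt_sqrt hp0.le).mpr (by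
        nlinarith [mul_le_mul_of_nonneg_right hk2 (sq_nonneg p₀), ha])
    have h2 : p₀ ^ n * ℓ < β ^ n * β :=
      calc p₀ ^ n * ℓ ≤ p₀ ^ n * β :=
            mul_le_mul_of_nonneg_left hℓβ (pow_nonneg hp0.le n)
        _ < β ^ n * β :=
            mul_lt_mul_of_pos_right (pow_lt_pow_left₀ hp₀β hp0.le (by omega)) hβ0
    have hβn : β ^ n * β = (α * β ^ (n - 1)) * ℓ :=
      calc β ^ n * β = β ^ (n + 1) := (pow_succ β n).symm
        _ = β ^ (2 + (n - 1)) := by rw [show 2 + (n - 1) = n + 1 by omega]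
        _ = β ^ 2 * β ^ (n - 1) := pow_add β 2 (n - 1)
        _ = a * β ^ (n - 1) := by rw [hβ2]
        _ = (α * ℓ) * β ^ (n - 1) := by rw [hαℓ]
        _ = (α * β ^ (n - 1)) * ℓ := by ring
    exact lt_of_mul_lt_mul_right (h2.trans_eq hβn) hℓ0.le
  -- conclude
  have habs : |(α * β ^ (n - 1))⁻¹| = (α * β ^ (n - 1))⁻¹ := abs_of_pos (inv_pos.mpr hD0)
  rw [habs]
  have hrhs : ENNReal.ofReal (ω.toReal / p₀ ^ n) = ω * ENNReal.ofReal ((p₀ ^ n)⁻¹) := by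
    rw [div_eq_mul_inv, ENNReal.ofReal_mul ENNReal.toReal_nonneg, ENNReal.ofReal_toReal hωt]
  rw [hrhs, mul_comm]
  exact (ENNReal.mul_lt_mul_iff_right hω0 hωt).mpr
    ((ENNReal.ofReal_lt_ofReal_iff (by positivity)).mpr (inv_strictAnti₀ hp0n hkey))
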